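/- Let p and q be pmfs on [n] = {1,...,n} sorted in descending order (p(1) ≥ ⋯ ≥ p(n), q(1) ≥ ⋯ ≥ q(n)) such that q ⪯ p. Then there exists an n×n lower triangular right stochastic matrix M, in which each row has at most one positive off-diagonal entry, such that the probability row vectors satisfy p⃗ = q⃗ M. -/

import Mathlib

open scoped ENNReal Classical
open Filter

namespace MEC

/-- A probability mass function on `α`: (nonnegative) masses summing to `1`. -/
def IsPMF {α : Type*} (p : α → ℝ≥0∞) : Prop := ∑' x, p x = 1

/-- `p` is an aggregation of `q`, written `q ⊑ p`: there is a map `g` sending the support of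
`q` into the support of `p` such that `p` is the pushforward of `q` under `g`. -/
def Agg {α β : Type*} (q : α → ℝ≥0∞) (p : β → ℝ≥0∞) : Prop :=
  ∃ g : α → β, (∀ x, q x ≠ 0 → p (g x) ≠ 0) ∧
    ∀ y, p y = ∑' x, if g x = y then q x else 0

/-- Sum of the `k` largest masses of `p`, i.e. `max_{A, |A| ≤ k} p(A)`. -/
noncomputable def topk {α : Type*} (p : α → ℝ≥0∞) (k : ℕ) : ℝ≥0∞ :=
  ⨆ (A : Finset α) (_ : A.card ≤ k), ∑ x ∈ A, p x

/-- `q` is majorized by `p`, written `q ⪯ p`: for every `k`, the sum of the `k` largest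
masses of `q` is at most the sum of the `k` largest masses of `p`. -/
def Majorized {α β : Type*} (q : α → ℝ≥0∞) (p : β → ℝ≥0∞) : Prop :=
  ∀ k : ℕ, topk q k ≤ topk p k

/-- Product pmf `(q × r)(x,z) = q(x) · r(z)`. -/
noncomputable def prodFun {α β : Type*} (q : α → ℝ≥0∞) (r : β → ℝ≥0∞) : α × β → ℝ≥0∞ :=
  fun z => q z.1 * r z.2

/-- `Geom_{1/2}` on `ℕ+ = {1,2,3,...}`, with mass `2^{-x}` at `x`. -/
noncomputable def geomHalf : ℕ+ → ℝ≥0∞ := fun x => 2⁻¹ ^ (x : ℕ)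

/-- Capped geometric distribution `CGeom_{1/2,k}` on `{1,...,k} ⊆ ℕ+`. -/
noncomputable def cgeomHalf (k : ℕ) : ℕ+ → ℝ≥0∞ := fun x =>
  if (x : ℕ) < k then 2⁻¹ ^ (x : ℕ) else if (x : ℕ) = k then 2⁻¹ ^ (k - 1) else 0

/-- `inf_{p ∈ S} max_{A ⊆ supp(p), |A| ≤ k} p(A)`. -/
noncomputable def infTopk {α : Type*} (S : Set (α → ℝ≥0∞)) (k : ℕ) : ℝ≥0∞ :=
  ⨅ p ∈ S, topk p k

/-- The greatest lower bound `⋀S` of `S` with respect to majorization, as a pmf on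
`ℕ+ = {1,2,...}`, with `(⋀S)(k) = inf_{p∈S} max_{|A|≤k} p(A) − inf_{p∈S} max_{|A|≤k−1} p(A)`. -/
noncomputable def glb {α : Type*} (S : Set (α → ℝ≥0∞)) : ℕ+ → ℝ≥0∞ :=
  fun k => infTopk S (k : ℕ) - infTopk S ((k : ℕ) - 1)

/-- Condition for the existence of `⋀S`:
`lim_{k→∞} inf_{p∈S} max_{A⊆supp(p), |A|≤k} p(A) = 1`. -/
def GlbExists {α : Type*} (S : Set (α → ℝ≥0∞)) : Prop :=
  Tendsto (fun k => infTopk S k) atTop (nhds 1)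

/-- Base-2 logarithm on `ℝ≥0∞` (intended for arguments in `[1,∞]`). -/
noncomputable def log2 (x : ℝ≥0∞) : ℝ≥0∞ :=
  if x = ∞ then ∞ else ENNReal.ofReal (Real.logb 2 x.toReal)

/-- Shannon entropy (base 2): `H(p) = Σ_x p(x) log₂ (1/p(x))`. -/
noncomputable def shannon {α : Type*} (p : α → ℝ≥0∞) : ℝ≥0∞ :=
  ∑' x, p x * log2 (p x)⁻¹

/-- Rényi entropy of order `a ∈ [0,∞]` (base 2):
`H_a(p) = (1/(1−a)) log₂ Σ_{x ∈ supp(p)} p(x)^a` for `a ∉ {1,∞}` (for `a > 1` this is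
written in the equivalent form `(1/(a−1)) log₂ (Σ_{x ∈ supp(p)} p(x)^a)⁻¹` so that it is
nonnegative), Shannon entropy for `a = 1`, and `−log₂ max_x p(x)` for `a = ∞`. -/
noncomputable def renyi {α : Type*} (p : α → ℝ≥0∞) (a : ℝ≥0∞) : ℝ≥0∞ :=
  if a = 1 then shannon p
  else if a = ∞ then log2 (⨆ x, p x)⁻¹
  else if a < 1 then log2 (∑' x, if p x = 0 then 0 else p x ^ a.toReal) * (1 - a)⁻¹
  else log2 (∑' x, if p x = 0 then 0 else p x ^ a.toReal)⁻¹ * (a - 1)⁻¹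

/-- `q ∈ Γ̃(S)`: `q` (a pmf over `ℕ`, without loss of generality) is an underlying
distribution of a coupling of `S`, i.e. `q ⊑ p` for every `p ∈ S`. -/
def UnderlyingCoupling {α : Type*} (S : Set (α → ℝ≥0∞)) (q : ℕ → ℝ≥0∞) : Prop :=
  IsPMF q ∧ ∀ p ∈ S, Agg q p

/-- `H*_a(S) = inf_{q ∈ Γ̃(S)} H_a(q)`, the minimum Rényi entropy of couplings of `S`. -/
noncomputable def minRenyi {α : Type*} (S : Set (α → ℝ≥0∞)) (a : ℝ≥0∞) : ℝ≥0∞ :=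
  ⨅ (q : ℕ → ℝ≥0∞) (_ : UnderlyingCoupling S q), renyi q a

/-- Lemma 1 in matrix form: for pmfs `p, q` on `[n]` (indexed by `Fin n`)
sorted in descending order with `q ⪯ p`, there exists a lower triangular right stochastic
matrix `M`, each of whose rows has at most one positive off-diagonal entry, with
`p⃗ = q⃗ M`. -/
private lemma sum_trunc (f : ℕ → ℝ) (n k : ℕ) (hf : ∀ x, n ≤ x → f x = 0) :
    ∑ x ∈ Finset.range k, f x = ∑ x ∈ Finset.range (min k n), f x := by
  rcases le_total k n with h | h
  · rw [min_eq_left h]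
  · rw [min_eq_right h]
    exact (Finset.sum_subset (Finset.range_subset_range.2 h) (fun x _ hx =>
      hf x (by simpa using hx))).symm

private lemma sum_ite_trunc (f : ℕ → ℝ) (n k : ℕ) :
    ∑ x ∈ Finset.range k, (if x < n then f x else 0) = ∑ x ∈ Finset.range (min k n), f x := by
  rw [sum_trunc (fun x => if x < n then f x else 0) n k
    (fun x hx => if_neg (not_lt.2 hx))]
  refine Finset.sum_congr rfl fun x hx => if_pos ?_
  exact lt_of_lt_of_le (Finset.mem_range.1 hx) (min_le_right _ _)

private lemma extend (n : ℕ) (p q q' p' : ℕ → ℝ) (M' : ℕ → ℕ → ℝ) (j : ℕ) (a b : ℝ)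
    (ha : 0 ≤ a) (hb : 0 ≤ b) (hab : a + b = 1)
    (hjn : j ≠ n) (hjb : j < n ∨ b = 0)
    (h1 : ∀ i k, 0 ≤ M' i k)
    (h2 : ∀ i, i < n → ∑ k ∈ Finset.range n, M' i k = 1)
    (h3 : ∀ i k, i < k → M' i k = 0)
    (h4 : ∀ i k l, k ≠ i → l ≠ i → 0 < M' i k → 0 < M' i l → k = l)
    (h5 : ∀ k, k < n → ∑ i ∈ Finset.range n, q' i * M' i k = p' k)
    (hq'eq : ∀ i, i < n → q' i = q i)
    (hcol : ∀ k, k < n → p' k + (if k = j then q n * b else 0) = p k)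
    (hcoln : q n * a = p n) :
    ∃ M : ℕ → ℕ → ℝ,
      (∀ i k, 0 ≤ M i k) ∧
      (∀ i, i < n + 1 → ∑ k ∈ Finset.range (n + 1), M i k = 1) ∧
      (∀ i k, i < k → M i k = 0) ∧
      (∀ i k l, k ≠ i → l ≠ i → 0 < M i k → 0 < M i l → k = l) ∧
      (∀ k, k < n + 1 → ∑ i ∈ Finset.range (n + 1), q i * M i k = p k) := by
  set M : ℕ → ℕ → ℝ := fun i k =>
    if i < n ∧ k < n then M' i k
    else if i = n ∧ k = n then a
    else if i = n ∧ k = j then b else 0 with hM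
  have hMlow : ∀ i k, i < n → ¬ k < n → M i k = 0 := by
    intro i k hi hk
    simp only [hM, true_and, lt_self_iff_false, false_and, if_false]
    split_ifs <;> first | rfl | omega
  have hMn : ∀ k, M n k = if k = n then a else if k = j then b else 0 := by
    intro k
    simp only [hM, true_and, lt_self_iff_false, false_and, if_false]
  have hMbig : ∀ i k, n < i → M i k = 0 := by
    intro i k hi
    simp only [hM, true_and, lt_self_iff_false, false_and, if_false]
    split_ifs <;> first | rfl | omega
  have hMin : ∀ i k, i < n → k < n → M i k = M' i k := by
    intro i k hi hk
    simp only [hM, true_and, lt_self_iff_false, false_and, if_false]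
    split_ifs <;> first | rfl | omega
  refine ⟨M, ?_, ?_, ?_, ?_, ?_⟩
  · intro i k
    simp only [hM, true_and, lt_self_iff_false, false_and, if_false]
    split_ifs <;> first | exact h1 i k | exact ha | exact hb | exact le_refl 0
  · intro i hi
    rcases Nat.lt_succ_iff_lt_or_eq.1 hi with hi | rfl
    · rw [Finset.sum_range_succ, hMlow i n hi (lt_irrefl n),
        Finset.sum_congr rfl (fun k hk => hMin i k hi (Finset.mem_range.1 hk)), h2 i hi]
      ring
    · have hsplit : ∀ k, M i k = (if k = i then a else 0) + (if k = j then b else 0) := by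
        intro k
        rw [hMn]
        rcases eq_or_ne k i with hk | hk
        · rw [if_pos hk, if_pos hk, if_neg (show ¬ k = j by omega), add_zero]
        · rw [if_neg hk, if_neg hk, zero_add]
      rw [Finset.sum_congr rfl (fun k _ => hsplit k), Finset.sum_add_distrib,
        Finset.sum_ite_eq' (Finset.range (i + 1)) i (fun _ => a),
        Finset.sum_ite_eq' (Finset.range (i + 1)) j (fun _ => b),
        if_pos (Finset.mem_range.2 (Nat.lt_succ_self i))]
      rcases hjb with hjb | hjb
      · rw [if_pos (Finset.mem_range.2 (Nat.lt_succ_of_lt hjb))]; exact hab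
      · subst hjb; split <;> simpa using hab
  · intro i k hik
    rcases lt_trichotomy i n with hi | rfl | hi
    · by_cases hk : k < n
      · rw [hMin i k hi hk]; exact h3 i k hik
      · exact hMlow i k hi hk
    · rw [hMn, if_neg (show ¬ k = i by omega)]
      rcases eq_or_ne k j with hk | hk
      · rw [if_pos hk]
        rcases hjb with hjb | hjb
        · omega
        · exact hjb
      · rw [if_neg hk]
    · rw [hMbig i k hi]
  · intro i k l hk hl hpk hpl
    rcases lt_trichotomy i n with hi | rfl | hi
    · have hkn : k < n := by
        by_contra hkn
        rw [hMlow i k hi hkn] at hpk; exact lt_irrefl 0 hpk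
      have hln : l < n := by
        by_contra hln
        rw [hMlow i l hi hln] at hpl; exact lt_irrefl 0 hpl
      rw [hMin i k hi hkn] at hpk
      rw [hMin i l hi hln] at hpl
      exact h4 i k l hk hl hpk hpl
    · have key : ∀ m, m ≠ i → 0 < M i m → m = j := by
        intro m hm hpm
        rw [hMn, if_neg hm] at hpm
        by_contra hmj
        rw [if_neg hmj] at hpm; exact lt_irrefl 0 hpm
      rw [key k hk hpk, key l hl hpl]
    · rw [hMbig i k hi] at hpk; exact absurd hpk (lt_irrefl 0)
  · intro k hk
    rcases Nat.lt_succ_iff_lt_or_eq.1 hk with hk | rfl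
    · rw [Finset.sum_range_succ, hMn, if_neg hk.ne]
      have hterm : ∀ i ∈ Finset.range n, q i * M i k = q' i * M' i k := by
        intro i hi
        have hi' := Finset.mem_range.1 hi
        rw [hMin i k hi' hk, hq'eq i hi']
      rw [Finset.sum_congr rfl hterm, h5 k hk, ← hcol k hk]
      split_ifs <;> ring
    · rw [Finset.sum_range_succ, hMn, if_pos rfl]
      have hterm : ∀ i ∈ Finset.range k, q i * M i k = 0 := by
        intro i hi
        rw [hMlow i k (Finset.mem_range.1 hi) (lt_irrefl k), mul_zero]
      rw [Finset.sum_congr rfl hterm, Finset.sum_const_zero, hcoln]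
      ring


private lemma aux : ∀ (n : ℕ) (p q : ℕ → ℝ),
    (∀ x, 0 ≤ p x) → (∀ x, 0 ≤ q x) →
    (∀ x, n ≤ x → p x = 0) →
    (∀ x y, x ≤ y → y < n → q y ≤ q x) →
    (∀ k, ∑ x ∈ Finset.range k, q x ≤ ∑ x ∈ Finset.range k, p x) →
    (∑ x ∈ Finset.range n, q x = ∑ x ∈ Finset.range n, p x) →
    ∃ M : ℕ → ℕ → ℝ,
      (∀ i k, 0 ≤ M i k) ∧
      (∀ i, i < n → ∑ k ∈ Finset.range n, M i k = 1) ∧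
      (∀ i k, i < k → M i k = 0) ∧
      (∀ i k l, k ≠ i → l ≠ i → 0 < M i k → 0 < M i l → k = l) ∧
      (∀ k, k < n → ∑ i ∈ Finset.range n, q i * M i k = p k) := by
  intro n
  induction n with
  | zero =>
    intro p q _ _ _ _ _ _
    exact ⟨fun _ _ => 0, fun _ _ => le_refl 0, fun i hi => absurd hi (Nat.not_lt_zero i),
      fun _ _ _ => rfl, fun i k l _ _ hk _ => absurd hk (lt_irrefl 0),
      fun k hk => absurd hk (Nat.not_lt_zero k)⟩
  | succ n ih =>
    intro p q hp0 hq0 hpv hqs hmaj htot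
    have htot' : ∑ x ∈ Finset.range n, q x + q n = ∑ x ∈ Finset.range n, p x + p n := by
      simpa [Finset.sum_range_succ] using htot
    have he : 0 ≤ q n - p n := by
      have := hmaj n; linarith
    set q' : ℕ → ℝ := fun x => if x < n then q x else 0 with hq'def
    have hq'0 : ∀ x, 0 ≤ q' x := fun x => by
      simp only [hq'def]; split
      · exact hq0 x
      · exact le_refl 0
    have hq's : ∀ x y, x ≤ y → y < n → q' y ≤ q' x := by
      intro x y hxy hy
      simp only [hq'def, if_pos hy, if_pos (lt_of_le_of_lt hxy hy)]
      exact hqs x y hxy (Nat.lt_succ_of_lt hy)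
    have hsq : ∀ k, ∑ x ∈ Finset.range k, q' x = ∑ x ∈ Finset.range (min k n), q x :=
      fun k => sum_ite_trunc q n k
    have hq'eq : ∀ i, i < n → q' i = q i := fun i hi => if_pos hi
    by_cases he0 : q n - p n = 0
    · -- Case A: `e = 0`, extend diagonally.
      set p' : ℕ → ℝ := fun x => if x < n then p x else 0 with hp'def
      have hp'0 : ∀ x, 0 ≤ p' x := fun x => by
        simp only [hp'def]; split
        · exact hp0 x
        · exact le_refl 0
      have hp'v : ∀ x, n ≤ x → p' x = 0 := fun x hx => if_neg (not_lt.2 hx)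
      have hsp : ∀ k, ∑ x ∈ Finset.range k, p' x = ∑ x ∈ Finset.range (min k n), p x :=
        fun k => sum_ite_trunc p n k
      have hmaj' : ∀ k, ∑ x ∈ Finset.range k, q' x ≤ ∑ x ∈ Finset.range k, p' x := by
        intro k; rw [hsq, hsp]; exact hmaj _
      have htot'' : ∑ x ∈ Finset.range n, q' x = ∑ x ∈ Finset.range n, p' x := by
        rw [hsq, hsp, min_self]; linarith
      obtain ⟨h1, h2, h3, h4, h5⟩ := (ih p' q' hp'0 hq'0 hp'v hq's hmaj' htot'').choose_spec
      refine extend n p q q' p' _ (n + 1) 1 0 zero_le_one (le_refl 0) (by ring)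
        (by omega) (Or.inr rfl) h1 h2 h3 h4 h5 hq'eq ?_ (by rw [mul_one]; linarith)
      intro k hkn
      rw [if_neg (show ¬ k = n + 1 by omega)]
      simp only [hp'def, if_pos hkn]
      ring
    · -- Case B: `e > 0`, alias construction.
      have hepos : 0 < q n - p n := lt_of_le_of_ne he (Ne.symm he0)
      have hqnpos : 0 < q n := by have := hp0 n; linarith
      have hqn0 : q n ≠ 0 := ne_of_gt hqnpos
      have hn : 0 < n := by
        rcases Nat.eq_zero_or_pos n with h | h
        · subst h
          simp only [Finset.range_zero, Finset.sum_empty] at htot'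
          linarith
        · exact h
      have hDn : (∑ x ∈ Finset.range n, p x) - ∑ x ∈ Finset.range n, q x = q n - p n := by
        linarith
      set j : ℕ := Nat.findGreatest
        (fun m => (∑ x ∈ Finset.range m, p x) - (∑ x ∈ Finset.range m, q x) < q n - p n)
        (n - 1) with hjdef
      have hjle : j ≤ n - 1 := by rw [hjdef]; apply Nat.findGreatest_le
      have hjn : j < n := lt_of_le_of_lt hjle (Nat.pred_lt hn.ne')
      have hDk : ∀ k, j < k → k ≤ n →
          q n - p n ≤ (∑ x ∈ Finset.range k, p x) - ∑ x ∈ Finset.range k, q x := by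
        intro k hjk hkn
        rcases eq_or_lt_of_le hkn with h | h
        · subst h; linarith
        · exact le_of_not_gt (Nat.findGreatest_is_greatest hjk (by omega))
      have hDj : (∑ x ∈ Finset.range j, p x) - (∑ x ∈ Finset.range j, q x) < q n - p n := by
        have h0 : (∑ x ∈ Finset.range 0, p x) - (∑ x ∈ Finset.range 0, q x) < q n - p n := by
          simpa using hepos
        exact Nat.findGreatest_spec
          (P := fun m => (∑ x ∈ Finset.range m, p x) - (∑ x ∈ Finset.range m, q x) < q n - p n)
          (Nat.zero_le _) h0
      have hpj : q n - p n ≤ p j := by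
        have h1 := hDk (j + 1) (Nat.lt_succ_self j) hjn
        have h2 : q n ≤ q j := hqs j n hjn.le (Nat.lt_succ_self n)
        have h3 := hp0 n
        rw [Finset.sum_range_succ, Finset.sum_range_succ] at h1
        linarith
      set p' : ℕ → ℝ := fun x =>
        (if x < n then p x else 0) - (if x = j then q n - p n else 0) with hp'def
      have hp'0 : ∀ x, 0 ≤ p' x := by
        intro x
        simp only [hp'def]
        by_cases hx : x = j
        · rw [if_pos hx, if_pos (hx ▸ hjn), hx]; linarith
        · rw [if_neg hx, sub_zero]
          split
          · exact hp0 x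
          · exact le_refl 0
      have hp'v : ∀ x, n ≤ x → p' x = 0 := by
        intro x hx
        simp only [hp'def, if_neg (not_lt.2 hx), if_neg (show ¬ x = j by omega)]
        ring
      have hsp : ∀ k, ∑ x ∈ Finset.range k, p' x =
          (∑ x ∈ Finset.range (min k n), p x) - (if j < k then q n - p n else 0) := by
        intro k
        simp only [hp'def]
        rw [Finset.sum_sub_distrib, sum_ite_trunc p n k,
          Finset.sum_ite_eq' (Finset.range k) j (fun _ => q n - p n)]
        congr 1
        by_cases h : j < k
        · rw [if_pos (Finset.mem_range.2 h), if_pos h]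
        · rw [if_neg (fun hm => h (Finset.mem_range.1 hm)), if_neg h]
      have hmaj' : ∀ k, ∑ x ∈ Finset.range k, q' x ≤ ∑ x ∈ Finset.range k, p' x := by
        intro k
        rw [hsq, hsp]
        by_cases h : j < k
        · rw [if_pos h]
          rcases le_total k n with hkn | hkn
          · rw [min_eq_left hkn]
            have := hDk k h hkn
            linarith
          · rw [min_eq_right hkn]
            linarith
        · rw [if_neg h]
          have := hmaj (min k n)
          linarith
      have htot'' : ∑ x ∈ Finset.range n, q' x = ∑ x ∈ Finset.range n, p' x := by
        rw [hsq, hsp, min_self, if_pos hjn]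
        linarith
      obtain ⟨h1, h2, h3, h4, h5⟩ := (ih p' q' hp'0 hq'0 hp'v hq's hmaj' htot'').choose_spec
      refine extend n p q q' p' _ j (p n / q n) ((q n - p n) / q n)
        (div_nonneg (hp0 n) hqnpos.le) (div_nonneg he hqnpos.le)
        (by field_simp; ring) hjn.ne (Or.inl hjn) h1 h2 h3 h4 h5 hq'eq ?_
        (by field_simp)
      intro k hkn
      simp only [hp'def, if_pos hkn]
      by_cases hk : k = j
      · rw [if_pos hk, if_pos hk, mul_div_cancel₀ _ hqn0]
        ring
      · rw [if_neg hk, if_neg hk]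
        ring


private lemma key (n : ℕ) (f : Fin n → ℝ) (k : ℕ) :
    ∑ x ∈ Finset.range k, (if h : x < n then f ⟨x, h⟩ else 0) =
    ∑ x ∈ Finset.univ.filter (fun x : Fin n => (x : ℕ) < k), f x := by
  rw [Finset.sum_filter]
  have h1 : ∑ x : Fin n, (if (x : ℕ) < k then f x else 0)
      = ∑ m ∈ Finset.range n, (if m < k then (if h : m < n then f ⟨m, h⟩ else 0) else 0) := by
    rw [← Fin.sum_univ_eq_sum_range
      (fun m => if m < k then (if h : m < n then f ⟨m, h⟩ else 0) else 0) n]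
    refine Finset.sum_congr rfl fun x _ => ?_
    by_cases hx : (x : ℕ) < k
    · rw [if_pos hx, if_pos hx, dif_pos x.isLt]
    · rw [if_neg hx, if_neg hx]
  rw [h1, sum_ite_trunc (fun m => if h : m < n then f ⟨m, h⟩ else 0) k n,
    sum_trunc (fun m => if h : m < n then f ⟨m, h⟩ else 0) n k
      (fun x hx => dif_neg (not_lt.2 hx)), Nat.min_comm]

theorem majorized_alias_matrix (n : ℕ) (p q : Fin n → ℝ)
    (hp0 : ∀ x, 0 ≤ p x) (hq0 : ∀ x, 0 ≤ q x)
    (hp1 : ∑ x, p x = 1) (hq1 : ∑ x, q x = 1)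
    (hpsort : ∀ x y : Fin n, x ≤ y → p y ≤ p x)
    (hqsort : ∀ x y : Fin n, x ≤ y → q y ≤ q x)
    (hmaj : ∀ k : ℕ,
      ∑ x ∈ Finset.univ.filter (fun x : Fin n => (x : ℕ) < k), q x ≤
        ∑ x ∈ Finset.univ.filter (fun x : Fin n => (x : ℕ) < k), p x) :
    ∃ M : Matrix (Fin n) (Fin n) ℝ,
      (∀ i j, 0 ≤ M i j) ∧
      (∀ i, ∑ j, M i j = 1) ∧
      (∀ i j : Fin n, i < j → M i j = 0) ∧
      (∀ i j k : Fin n, j ≠ i → k ≠ i → 0 < M i j → 0 < M i k → j = k) ∧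
      (∀ j, ∑ i, q i * M i j = p j) := by
  have huniv : Finset.univ.filter (fun x : Fin n => (x : ℕ) < n) = Finset.univ :=
    Finset.filter_true_of_mem (fun x _ => x.isLt)
  obtain ⟨M, h1, h2, h3, h4, h5⟩ :=
    aux n (fun m => if h : m < n then p ⟨m, h⟩ else 0)
      (fun m => if h : m < n then q ⟨m, h⟩ else 0)
      (fun x => by split
                   · exact hp0 _
                   · exact le_refl 0)
      (fun x => by split
                   · exact hq0 _
                   · exact le_refl 0)
      (fun x hx => dif_neg (not_lt.2 hx))
      (fun x y hxy hy => by
        rw [dif_pos hy, dif_pos (lt_of_le_of_lt hxy hy)]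
        exact hqsort ⟨x, lt_of_le_of_lt hxy hy⟩ ⟨y, hy⟩ hxy)
      (fun k => by rw [key n p k, key n q k]; exact hmaj k)
      (by rw [key n p n, key n q n, huniv, hp1, hq1])
  refine ⟨fun i j => M i j, fun i j => h1 i j, ?_, ?_, ?_, ?_⟩
  · intro i
    rw [Fin.sum_univ_eq_sum_range (fun m => M i m) n]
    exact h2 i i.isLt
  · intro i j hij
    exact h3 i j hij
  · intro i j k hj hk hpj hpk
    exact Fin.ext (h4 i j k (fun h => hj (Fin.ext h)) (fun h => hk (Fin.ext h)) hpj hpk)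
  · intro j
    calc ∑ i : Fin n, q i * M i j
        = ∑ i ∈ Finset.range n, (if h : i < n then q ⟨i, h⟩ else 0) * M i j := by
          rw [← Fin.sum_univ_eq_sum_range
            (fun m => (if h : m < n then q ⟨m, h⟩ else 0) * M m j) n]
          exact Finset.sum_congr rfl fun i _ => by rw [dif_pos i.isLt]
      _ = (if h : (j : ℕ) < n then p ⟨j, h⟩ else 0) := h5 j j.isLt
      _ = p j := dif_pos j.isLt


end MEC
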